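/- Derandomized low-collision partition (existence form): Let n, M, T ∈ ℕ with M ≥ 3, R ⊆ [n], and let 𝒞 be a collection of at most M pairs (S, imp_S) with S ⊆ R and imp_S ≥ 0. Then there exists a partition Q₁ ⊔ Q₂ ⊔ … ⊔ Q_T = R such that (1) Σ_{(S,imp_S)∈𝒞} imp_S·Σ_{t=1}^T C(|S ∩ Q_t|,2) ≤ (2/T)·Σ_{(S,imp_S)∈𝒞} imp_S·C(|S|,2), and (2) |Q_t| ≤ max(1, 10·log(n)·|R|/T) for every t ∈ [T]. -/

import Mathlib

open Finset

lemma aux_fiber_card (P T : ℕ) [NeZero P] (c : ℕ) :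
    (Finset.univ.filter (fun z : ZMod P => z.val % T = c)).card ≤ P / T + 1 := by
  classical
  have h := Finset.card_le_card_of_injOn (s := Finset.univ.filter (fun z : ZMod P => z.val % T = c))
    (t := Finset.range (P / T + 1)) (fun z => z.val / T) ?_ ?_
  · simpa using h
  · intro z hz
    simp only [Finset.mem_range]
    have : z.val / T ≤ P / T := Nat.div_le_div_right (le_of_lt (ZMod.val_lt z))
    simpa using Nat.lt_succ_of_le this
  · intro z hz w hw hzw
    simp only [coe_filter, Set.mem_setOf_eq, mem_univ, true_and] at hz hw
    simp only at hzw
    apply ZMod.val_injective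
    have h1 : z.val = T * (z.val / T) + z.val % T := (Nat.div_add_mod z.val T).symm
    have h2 : w.val = T * (w.val / T) + w.val % T := (Nat.div_add_mod w.val T).symm
    rw [h1, h2, hz, hw, hzw]

lemma aux_bij_sum (P : ℕ) [Fact P.Prime] (a b : ZMod P) (hab : a ≠ b)
    (F : ZMod P → ZMod P → ℝ) :
    ∑ uv ∈ ((Finset.univ.filter (fun u : ZMod P => u ≠ 0)) ×ˢ Finset.univ),
        F (uv.1 * a + uv.2) (uv.1 * b + uv.2)
      = ∑ zw ∈ (Finset.univ : Finset (ZMod P)).offDiag, F zw.1 zw.2 := by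
  classical
  have hab' : a - b ≠ 0 := sub_ne_zero.mpr hab
  refine Finset.sum_nbij' (fun uv => (uv.1 * a + uv.2, uv.1 * b + uv.2))
    (fun zw => ((zw.1 - zw.2) / (a - b), zw.1 - ((zw.1 - zw.2) / (a - b)) * a))
    ?_ ?_ ?_ ?_ ?_
  · rintro ⟨u, v⟩ huv
    simp only [mem_product, mem_filter, mem_univ, true_and] at huv
    simp only [Finset.mem_offDiag, mem_univ, true_and]
    intro h
    apply huv.1
    have : u * (a - b) = 0 := by ring_nf; linear_combination h
    rcases mul_eq_zero.mp this with h' | h'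
    · exact h'
    · exact absurd h' hab'
  · rintro ⟨z, w⟩ hzw
    simp only [Finset.mem_offDiag, mem_univ, true_and] at hzw
    simp only [mem_product, mem_filter, mem_univ, true_and]
    exact ⟨div_ne_zero (sub_ne_zero.mpr hzw) hab', trivial⟩
  · rintro ⟨u, v⟩ huv
    simp only [mem_product, mem_filter, mem_univ, true_and] at huv
    have : (u * a + v - (u * b + v)) / (a - b) = u := by
      field_simp
      ring
    simp only [Prod.mk.injEq]
    constructor
    · exact this
    · rw [this]; ring
  · rintro ⟨z, w⟩ hzw
    simp only [Finset.mem_offDiag, mem_univ, true_and] at hzw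
    simp only [Prod.mk.injEq]
    constructor
    · field_simp; ring
    · field_simp
      ring
  · rintro ⟨u, v⟩ _
    rfl

lemma aux_D (P T : ℕ) [Fact P.Prime] (hT : 0 < T) :
    ∑ zw ∈ (Finset.univ : Finset (ZMod P)).offDiag,
        (if zw.1.val % T = zw.2.val % T then (1:ℝ) else 0) ≤ 2 * P * ((P : ℝ) - 1) / T := by
  classical
  have hP2 : 2 ≤ P := (Fact.out : P.Prime).two_le
  haveI : NeZero P := ⟨by omega⟩
  set f : ZMod P × ZMod P → ℝ := fun zw => if zw.1.val % T = zw.2.val % T then (1:ℝ) else 0 with hf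
  have hsplit : ∑ zw ∈ (Finset.univ : Finset (ZMod P)) ×ˢ Finset.univ, f zw
      = ∑ zw ∈ (Finset.univ : Finset (ZMod P)).diag, f zw
        + ∑ zw ∈ (Finset.univ : Finset (ZMod P)).offDiag, f zw := by
    rw [← Finset.sum_union (Finset.disjoint_diag_offDiag _), Finset.diag_union_offDiag]
  have hdiag : ∑ zw ∈ (Finset.univ : Finset (ZMod P)).diag, f zw = P := by
    rw [Finset.sum_diag]
    simp [hf, Finset.card_univ, ZMod.card]
  have hprod : ∑ zw ∈ (Finset.univ : Finset (ZMod P)) ×ˢ Finset.univ, f zw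
      ≤ P * ((P / T : ℕ) + 1 : ℝ) := by
    rw [Finset.sum_product]
    have hinner : ∀ z : ZMod P, ∑ w : ZMod P, f (z, w) ≤ ((P / T : ℕ) + 1 : ℝ) := by
      intro z
      have h1 : ∑ w : ZMod P, f (z, w)
          = ((Finset.univ.filter (fun w : ZMod P => z.val % T = w.val % T)).card : ℝ) := by
        simp [hf, Finset.sum_boole]
      have h2 : Finset.univ.filter (fun w : ZMod P => z.val % T = w.val % T)
          = Finset.univ.filter (fun w : ZMod P => w.val % T = z.val % T) := by
        ext w; simp [eq_comm]
      rw [h1, h2]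
      have := aux_fiber_card P T (z.val % T)
      have : ((Finset.univ.filter (fun w : ZMod P => w.val % T = z.val % T)).card : ℝ)
          ≤ ((P / T + 1 : ℕ) : ℝ) := by exact_mod_cast this
      simpa using this
    calc ∑ z : ZMod P, ∑ w : ZMod P, f (z, w) ≤ ∑ _z : ZMod P, ((P / T : ℕ) + 1 : ℝ) :=
          Finset.sum_le_sum (fun z _ => hinner z)
      _ = P * ((P / T : ℕ) + 1 : ℝ) := by
          simp [Finset.card_univ, ZMod.card]
          ring
  have hoff : ∑ zw ∈ (Finset.univ : Finset (ZMod P)).offDiag, f zw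
      ≤ P * ((P / T : ℕ) : ℝ) := by
    have := hsplit ▸ hprod
    rw [hdiag] at this
    nlinarith [this]
  have hT' : (0:ℝ) < T := by exact_mod_cast hT
  have hP' : (2:ℝ) ≤ P := by exact_mod_cast hP2
  calc ∑ zw ∈ (Finset.univ : Finset (ZMod P)).offDiag, f zw
      ≤ P * ((P / T : ℕ) : ℝ) := hoff
    _ ≤ P * ((P : ℝ) / T) := by
        apply mul_le_mul_of_nonneg_left Nat.cast_div_le (by positivity)
    _ ≤ 2 * P * ((P : ℝ) - 1) / T := by
        rw [mul_div_assoc'] at *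
        rw [div_le_div_iff₀ hT' hT']
        have h1 : (0:ℝ) ≤ (P:ℝ) * ((P:ℝ) - 2) :=
          mul_nonneg (by positivity) (by linarith)
        nlinarith [le_of_lt hT']

lemma aux_pairs {n T : ℕ} (s : Finset (Fin n)) (χ : Fin n → Fin T) :
    ∑ t : Fin T, ((s.filter (fun x => χ x = t)).card.choose 2 : ℝ)
      = (∑ p ∈ s.offDiag, if χ p.1 = χ p.2 then (1:ℝ) else 0) / 2 := by
  classical
  have hb : s.offDiag.filter (fun p => χ p.1 = χ p.2)
      = Finset.univ.biUnion (fun t : Fin T => (s.filter (fun x => χ x = t)).offDiag) := by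
    ext ⟨x, y⟩
    simp only [Finset.mem_filter, Finset.mem_offDiag, Finset.mem_biUnion, Finset.mem_univ,
      true_and]
    constructor
    · rintro ⟨⟨hx, hy, hxy⟩, hc⟩
      exact ⟨χ x, ⟨hx, rfl⟩, ⟨hy, hc.symm⟩, hxy⟩
    · rintro ⟨t, ⟨hx, hcx⟩, ⟨hy, hcy⟩, hxy⟩
      exact ⟨⟨hx, hy, hxy⟩, by rw [hcx, hcy]⟩
  have hdisj : ∀ t ∈ (Finset.univ : Finset (Fin T)), ∀ t' ∈ Finset.univ, t ≠ t' →
      Disjoint ((s.filter (fun x => χ x = t)).offDiag) ((s.filter (fun x => χ x = t')).offDiag) := by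
    intro t _ t' _ htt'
    rw [Finset.disjoint_left]
    rintro ⟨x, y⟩ hp hp'
    simp only [Finset.mem_offDiag, Finset.mem_filter] at hp hp'
    exact htt' (hp.1.2 ▸ hp'.1.2 ▸ rfl)
  have hcard : (s.offDiag.filter (fun p => χ p.1 = χ p.2)).card
      = ∑ t : Fin T, ((s.filter (fun x => χ x = t)).offDiag).card := by
    rw [hb]; exact Finset.card_biUnion hdisj
  have hsum : (∑ p ∈ s.offDiag, if χ p.1 = χ p.2 then (1:ℝ) else 0)
      = ((s.offDiag.filter (fun p => χ p.1 = χ p.2)).card : ℝ) := by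
    simp [Finset.sum_boole]
  rw [hsum, hcard, Nat.cast_sum, Finset.sum_div]
  refine Finset.sum_congr rfl fun t _ => ?_
  set m := (s.filter (fun x => χ x = t)).card with hm
  have hmm : m ≤ m * m := by nlinarith
  rw [Finset.offDiag_card, Nat.cast_choose_two, Nat.cast_sub hmm, Nat.cast_mul]
  ring

set_option maxHeartbeats 1000000 in
/-- Derandomized low-collision partition (existence form). -/
theorem low_collision_partition_exists (n M T K : ℕ) (hM : 3 ≤ M) (hT : 1 ≤ T)
    (hK : K ≤ M) (R : Finset (Fin n))
    (C : Fin K → Finset (Fin n) × ℝ)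
    (hC : ∀ i, (C i).1 ⊆ R ∧ 0 ≤ (C i).2) :
    ∃ Q : Fin T → Finset (Fin n),
      (∀ t, Q t ⊆ R) ∧
      (∀ t t', t ≠ t' → Disjoint (Q t) (Q t')) ∧
      (Finset.univ.biUnion Q = R) ∧
      (∑ i, (C i).2 * ∑ t, (((C i).1 ∩ Q t).card.choose 2 : ℝ)
        ≤ (2 / T) * ∑ i, (C i).2 * ((C i).1.card.choose 2 : ℝ)) ∧
      (∀ t, ((Q t).card : ℝ) ≤ max 1 (10 * Real.log n * R.card / T)) := by
  classical
  have hT0 : 0 < T := hT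
  suffices h : ∃ χ : Fin n → Fin T,
      (∀ t : Fin T, ((R.filter (fun x => χ x = t)).card : ℝ)
          ≤ max 1 (10 * Real.log n * R.card / T)) ∧
      (∑ i, (C i).2 * ∑ t, (((C i).1.filter (fun x => χ x = t)).card.choose 2 : ℝ)
        ≤ (2 / T) * ∑ i, (C i).2 * ((C i).1.card.choose 2 : ℝ)) by
    obtain ⟨χ, hsize, hcol⟩ := h
    refine ⟨fun t => R.filter (fun x => χ x = t), fun t => Finset.filter_subset _ _, ?_, ?_, ?_,
      hsize⟩
    · intro t t' htt'
      rw [Finset.disjoint_left]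
      intro x hx hx'
      simp only [Finset.mem_filter] at hx hx'
      exact htt' (hx.2 ▸ hx'.2 ▸ rfl)
    · ext x
      simp only [Finset.mem_biUnion, Finset.mem_univ, true_and, Finset.mem_filter]
      constructor
      · rintro ⟨t, hx, _⟩; exact hx
      · intro hx; exact ⟨χ x, hx, rfl⟩
    · have hinter : ∀ (i : Fin K) (t : Fin T),
          (C i).1 ∩ R.filter (fun x => χ x = t) = (C i).1.filter (fun x => χ x = t) := by
        intro i t
        ext x
        simp only [Finset.mem_inter, Finset.mem_filter]
        exact ⟨fun ⟨h1, _, h3⟩ => ⟨h1, h3⟩, fun ⟨h1, h2⟩ => ⟨h1, (hC i).1 h1, h2⟩⟩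
      simpa only [hinter] using hcol
  by_cases hcase : R.card ≤ T
  · -- injective coloring
    have hcard : Fintype.card {x // x ∈ R} ≤ Fintype.card (Fin T) := by
      simpa [Fintype.card_coe] using hcase
    obtain ⟨e⟩ := Function.Embedding.nonempty_of_card_le hcard
    set χ : Fin n → Fin T := fun x => if h : x ∈ R then e ⟨x, h⟩ else ⟨0, hT0⟩ with hχ
    have hfib : ∀ (s : Finset (Fin n)), s ⊆ R → ∀ t : Fin T,
        (s.filter (fun x => χ x = t)).card ≤ 1 := by
      intro s hs t
      rw [Finset.card_le_one]
      intro x hx y hy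
      simp only [Finset.mem_filter] at hx hy
      have hxR : x ∈ R := hs hx.1
      have hyR : y ∈ R := hs hy.1
      have hxy : χ x = χ y := hx.2.trans hy.2.symm
      rw [hχ] at hxy
      simp only [dif_pos hxR, dif_pos hyR] at hxy
      exact Subtype.ext_iff.mp (e.injective hxy)
    refine ⟨χ, ?_, ?_⟩
    · intro t
      have h1 := hfib R (le_refl _) t
      exact le_trans (by exact_mod_cast h1) (le_max_left _ _)
    · have hzero : ∀ (i : Fin K) (t : Fin T),
          (((C i).1.filter (fun x => χ x = t)).card.choose 2 : ℝ) = 0 := by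
        intro i t
        have := hfib (C i).1 (hC i).1 t
        rw [Nat.choose_eq_zero_of_lt (by omega)]
        simp
      have hL : ∑ i, (C i).2 * ∑ t, (((C i).1.filter (fun x => χ x = t)).card.choose 2 : ℝ)
          = 0 := by
        refine Finset.sum_eq_zero fun i _ => ?_
        rw [Finset.sum_eq_zero fun t _ => hzero i t, mul_zero]
      rw [hL]
      apply mul_nonneg (by positivity)
      exact Finset.sum_nonneg fun i _ => mul_nonneg (hC i).2 (by positivity)
  · -- algebraic family
    push_neg at hcase
    set r := R.card with hr
    have hr2 : 2 ≤ r := by omega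
    obtain ⟨P, hPp, hrP, hP2r⟩ := Nat.exists_prime_lt_and_le_two_mul r (by omega)
    haveI : Fact P.Prime := ⟨hPp⟩
    haveI : NeZero P := ⟨hPp.pos.ne'⟩
    have hn2 : 2 ≤ n := by
      have := R.card_le_univ
      simp only [Finset.card_univ, Fintype.card_fin] at this
      omega
    set eR := R.orderIsoOfFin rfl with heR
    set ι : Fin n → ZMod P := fun x =>
      if h : x ∈ R then (((eR.symm ⟨x, h⟩ : Fin r) : ℕ) : ZMod P) else 0 with hι
    have hιinj : ∀ x ∈ R, ∀ y ∈ R, ι x = ι y → x = y := by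
      intro x hx y hy hxy
      simp only [hι, dif_pos hx, dif_pos hy] at hxy
      have hx' : ((eR.symm ⟨x, hx⟩ : Fin r) : ℕ) < P := lt_trans (Fin.is_lt _) hrP
      have hy' : ((eR.symm ⟨y, hy⟩ : Fin r) : ℕ) < P := lt_trans (Fin.is_lt _) hrP
      have hnat : ((eR.symm ⟨x, hx⟩ : Fin r) : ℕ) = ((eR.symm ⟨y, hy⟩ : Fin r) : ℕ) := by
        rw [← ZMod.val_cast_of_lt hx', ← ZMod.val_cast_of_lt hy', hxy]
      have hfin : eR.symm ⟨x, hx⟩ = eR.symm ⟨y, hy⟩ := Fin.ext hnat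
      exact Subtype.ext_iff.mp (eR.symm.injective hfin)
    set Fam : Finset (ZMod P × ZMod P) :=
      (Finset.univ.filter (fun u : ZMod P => u ≠ 0)) ×ˢ Finset.univ with hFam
    set χF : ZMod P × ZMod P → Fin n → Fin T :=
      fun uv x => ⟨(uv.1 * ι x + uv.2).val % T, Nat.mod_lt _ hT0⟩ with hχF
    -- size bound
    have hsize : ∀ uv ∈ Fam, ∀ t : Fin T,
        ((R.filter (fun x => χF uv x = t)).card : ℝ)
          ≤ max 1 (10 * Real.log n * R.card / T) := by
      intro uv huv t
      have huv1 : uv.1 ≠ 0 := by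
        simp only [hFam, Finset.mem_product, Finset.mem_filter, Finset.mem_univ, true_and] at huv
        exact huv.1
      have hcard1 : (R.filter (fun x => χF uv x = t)).card
          ≤ (Finset.univ.filter (fun z : ZMod P => z.val % T = (t : ℕ))).card := by
        apply Finset.card_le_card_of_injOn (fun x => uv.1 * ι x + uv.2)
        · intro x hx
          simp only [Finset.coe_filter, Set.mem_setOf_eq, Finset.mem_filter, Finset.mem_univ, true_and] at hx ⊢
          have := hx.2
          rw [hχF] at this
          exact congrArg Fin.val this
        · intro x hx y hy hxy
          simp only [Finset.coe_filter, Set.mem_setOf_eq] at hx hy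
          simp only at hxy
          have : ι x = ι y := by
            have := add_right_cancel hxy
            exact mul_left_cancel₀ huv1 this
          exact hιinj x hx.1 y hy.1 this
      have hcard2 := aux_fiber_card P T (t : ℕ)
      have hcard3 : ((R.filter (fun x => χF uv x = t)).card : ℝ) ≤ ((P / T : ℕ) : ℝ) + 1 := by
        have := le_trans hcard1 hcard2
        exact_mod_cast this
      have hT' : (0:ℝ) < T := by exact_mod_cast hT0
      have hrT : (T:ℝ) ≤ r := by exact_mod_cast le_of_lt hcase
      have h1r : (1:ℝ) ≤ (r:ℝ) / T := (one_le_div hT').mpr hrT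
      have hPle : (P:ℝ) ≤ 2 * r := by exact_mod_cast hP2r
      have hchain : ((P / T : ℕ) : ℝ) + 1 ≤ 3 * ((r:ℝ) / T) := by
        have h1 : ((P / T : ℕ) : ℝ) ≤ (P:ℝ) / T := Nat.cast_div_le
        have h2 : (P:ℝ) / T ≤ 2 * r / T := by
          gcongr
        have : 2 * (r:ℝ) / T + 1 ≤ 3 * ((r:ℝ) / T) := by
          rw [mul_div_assoc]
          linarith
        calc ((P / T : ℕ) : ℝ) + 1 ≤ 2 * (r:ℝ) / T + 1 := by linarith
          _ ≤ 3 * ((r:ℝ) / T) := this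
      have hlog : (3:ℝ) ≤ 10 * Real.log n := by
        have h2n : (2:ℝ) ≤ n := by exact_mod_cast hn2
        have := Real.log_two_gt_d9
        have hle : Real.log 2 ≤ Real.log n := Real.log_le_log (by norm_num) h2n
        nlinarith
      have hfinal : 3 * ((r:ℝ) / T) ≤ 10 * Real.log n * r / T := by
        rw [mul_div_assoc]
        apply mul_le_mul_of_nonneg_right hlog
        positivity
      calc ((R.filter (fun x => χF uv x = t)).card : ℝ)
          ≤ ((P / T : ℕ) : ℝ) + 1 := hcard3
        _ ≤ 3 * ((r:ℝ) / T) := hchain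
        _ ≤ 10 * Real.log n * r / T := hfinal
        _ ≤ max 1 (10 * Real.log n * R.card / T) := le_max_right _ _
    -- collision bound via averaging
    have hFamcard : (Fam.card : ℝ) = ((P:ℝ) - 1) * P := by
      have h1 : (Finset.univ.filter (fun u : ZMod P => u ≠ 0)).card = P - 1 := by
        rw [Finset.filter_ne', Finset.card_erase_of_mem (Finset.mem_univ _),
          Finset.card_univ, ZMod.card]
      rw [hFam, Finset.card_product, h1, Finset.card_univ, ZMod.card, Nat.cast_mul,
        Nat.cast_sub hPp.one_lt.le]
      simp
    have hI : ∀ i : Fin K,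
        ∑ uv ∈ Fam, ∑ t : Fin T, (((C i).1.filter (fun x => χF uv x = t)).card.choose 2 : ℝ)
          ≤ ((P:ℝ) - 1) * P * ((2 / T) * ((C i).1.card.choose 2 : ℝ)) := by
      intro i
      set s := (C i).1 with hs
      have hsub : s ⊆ R := (hC i).1
      have hpp : ∀ p ∈ s.offDiag,
          (∑ uv ∈ Fam, if χF uv p.1 = χF uv p.2 then (1:ℝ) else 0)
            ≤ 2 * P * ((P:ℝ) - 1) / T := by
        intro p hp
        rw [Finset.mem_offDiag] at hp
        have hne : ι p.1 ≠ ι p.2 := fun h => hp.2.2 (hιinj p.1 (hsub hp.1) p.2 (hsub hp.2.1) h)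
        have step1 : (∑ uv ∈ Fam, if χF uv p.1 = χF uv p.2 then (1:ℝ) else 0)
            = ∑ uv ∈ Fam, (if (uv.1 * ι p.1 + uv.2).val % T = (uv.1 * ι p.2 + uv.2).val % T
                then (1:ℝ) else 0) := by
          refine Finset.sum_congr rfl fun uv _ => ?_
          simp [hχF, Fin.ext_iff]
        have step2 : (∑ uv ∈ Fam, if (uv.1 * ι p.1 + uv.2).val % T
              = (uv.1 * ι p.2 + uv.2).val % T then (1:ℝ) else 0)
            = ∑ zw ∈ (Finset.univ : Finset (ZMod P)).offDiag,
                (if zw.1.val % T = zw.2.val % T then (1:ℝ) else 0) :=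
          aux_bij_sum P (ι p.1) (ι p.2) hne
            (fun z w => if z.val % T = w.val % T then (1:ℝ) else 0)
        rw [step1, step2]
        exact aux_D P T hT0
      calc ∑ uv ∈ Fam, ∑ t : Fin T, ((s.filter (fun x => χF uv x = t)).card.choose 2 : ℝ)
          = ∑ uv ∈ Fam, (∑ p ∈ s.offDiag, if χF uv p.1 = χF uv p.2 then (1:ℝ) else 0) / 2 :=
            Finset.sum_congr rfl fun uv _ => aux_pairs s (χF uv)
        _ = (∑ p ∈ s.offDiag, ∑ uv ∈ Fam, if χF uv p.1 = χF uv p.2 then (1:ℝ) else 0) / 2 := by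
            rw [← Finset.sum_div, Finset.sum_comm]
        _ ≤ (∑ _p ∈ s.offDiag, 2 * P * ((P:ℝ) - 1) / T) / 2 := by
            gcongr with p hp
            exact hpp p hp
        _ = (s.offDiag.card : ℝ) * (2 * P * ((P:ℝ) - 1) / T) / 2 := by
            rw [Finset.sum_const, nsmul_eq_mul]
        _ = ((P:ℝ) - 1) * P * ((2 / T) * ((s.card.choose 2 : ℕ) : ℝ)) := by
            have hmm : s.card ≤ s.card * s.card := by nlinarith
            rw [Finset.offDiag_card, Nat.cast_sub hmm, Nat.cast_mul, Nat.cast_choose_two]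
            have hT' : (T:ℝ) ≠ 0 := by positivity
            field_simp
    have hFamne : Fam.Nonempty := by
      refine ⟨(1, 0), ?_⟩
      simp [hFam]
    have main : ∑ uv ∈ Fam,
        (∑ i, (C i).2 * ∑ t : Fin T, (((C i).1.filter (fun x => χF uv x = t)).card.choose 2 : ℝ))
        ≤ ∑ uv ∈ Fam, ((2 / T) * ∑ i, (C i).2 * ((C i).1.card.choose 2 : ℝ)) := by
      rw [Finset.sum_comm]
      calc ∑ i, ∑ uv ∈ Fam,
            (C i).2 * ∑ t : Fin T, (((C i).1.filter (fun x => χF uv x = t)).card.choose 2 : ℝ)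
          = ∑ i, (C i).2 * ∑ uv ∈ Fam,
              ∑ t : Fin T, (((C i).1.filter (fun x => χF uv x = t)).card.choose 2 : ℝ) := by
            refine Finset.sum_congr rfl fun i _ => ?_
            rw [Finset.mul_sum]
        _ ≤ ∑ i, (C i).2 * (((P:ℝ) - 1) * P * ((2 / T) * ((C i).1.card.choose 2 : ℝ))) :=
            Finset.sum_le_sum fun i _ => mul_le_mul_of_nonneg_left (hI i) (hC i).2
        _ = ∑ uv ∈ Fam, ((2 / T) * ∑ i, (C i).2 * ((C i).1.card.choose 2 : ℝ)) := by
            rw [Finset.sum_const, nsmul_eq_mul, hFamcard, Finset.mul_sum, Finset.mul_sum]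
            refine Finset.sum_congr rfl fun i _ => ?_
            ring
    obtain ⟨uv, huv, hle⟩ := Finset.exists_le_of_sum_le hFamne main
    exact ⟨χF uv, hsize uv huv, hle⟩
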